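/- Let A be an integral domain with field of fractions K, let H be an associative A-algebra, finitely generated and free as an A-module, which is Z-graded, and let O be a valuation ring with A ⊆ O ⊆ K. Then every finite-dimensional graded KH-module V = ⊕_{j∈Z} V_j admits a graded OH-lattice Ṽ = ⊕_{ℓ∈Z} Ṽ_ℓ: a graded OH-submodule of V, finitely generated and free as an O-module, with each Ṽ_ℓ an O-submodule of V_ℓ, such that V ≅ K ⊗_O Ṽ as graded KH-modules (any O-basis of Ṽ is a K-basis of V). -/

import Mathlib

universe u

open DirectSum Function

/-! ## Modules over `S ⊗_A H`

For an `A`-algebra `H` and a commutative `A`-algebra `S`, a (finitely generated) module over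
the `S`-algebra `S ⊗_A H` is the same thing as an `S`-module together with a commuting
`H`-action such that the two induced `A`-actions agree.  We package this data in a structure. -/

structure ModPkg (A : Type u) [CommRing A] (H : Type u) [Ring H] [Algebra A H]
    (S : Type u) [CommRing S] [Algebra A S] : Type (u + 1) where
  carrier : Type u
  [acg : AddCommGroup carrier]
  [modS : Module S carrier]
  [modH : Module H carrier]
  smul_comm' : ∀ (h : H) (s : S) (x : carrier), h • s • x = s • h • x
  compat : ∀ (a : A) (x : carrier), (algebraMap A H a) • x = (algebraMap A S a) • x
  [fin : Module.Finite S carrier]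

attribute [instance] ModPkg.acg ModPkg.modS ModPkg.modH ModPkg.fin

section Ungraded

variable {A : Type u} [CommRing A] {H : Type u} [Ring H] [Algebra A H]
  {S : Type u} [CommRing S] [Algebra A S]

namespace ModPkg

/-- A subgroup stable under both scalar actions, i.e. an `S ⊗_A H`-submodule. -/
def IsStable (M : ModPkg A H S) (p : AddSubgroup M.carrier) : Prop :=
  (∀ (s : S), ∀ x ∈ p, s • x ∈ p) ∧ (∀ (h : H), ∀ x ∈ p, h • x ∈ p)

/-- Simplicity of an `S ⊗_A H`-module. -/
def Simple (M : ModPkg A H S) : Prop :=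
  Nontrivial M.carrier ∧ ∀ p : AddSubgroup M.carrier, M.IsStable p → p = ⊥ ∨ p = ⊤

/-- Isomorphism of `S ⊗_A H`-modules. -/
def Iso (M N : ModPkg A H S) : Prop :=
  ∃ e : M.carrier ≃+ N.carrier,
    (∀ (s : S) (x : M.carrier), e (s • x) = s • e x) ∧
    (∀ (h : H) (x : M.carrier), e (h • x) = h • e x)

/-- The action of an element of `H` as an `S`-linear endomorphism. -/
noncomputable def act (M : ModPkg A H S) (h : H) : M.carrier →ₗ[S] M.carrier where
  toFun x := h • x
  map_add' x y := smul_add h x y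
  map_smul' s x := by simpa using M.smul_comm' h s x

/-- The character of an `S ⊗_A H`-module, as a function on `H`. -/
noncomputable def char (M : ModPkg A H S) : H → S :=
  fun h => LinearMap.trace S M.carrier (M.act h)

/-- The factor `q/p` is isomorphic to `M` (as `S ⊗_A H`-modules), witnessed by a surjection
`q → M` with kernel `p`. -/
def IsFactor (V : ModPkg A H S) (p q : AddSubgroup V.carrier) (M : ModPkg A H S) : Prop :=
  ∃ φ : q →+ M.carrier,
    Surjective φ ∧
    (∀ x : q, φ x = 0 ↔ (x : V.carrier) ∈ p) ∧
    (∀ (s : S) (x y : q), (y : V.carrier) = s • (x : V.carrier) → φ y = s • φ x) ∧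
    (∀ (h : H) (x y : q), (y : V.carrier) = h • (x : V.carrier) → φ y = h • φ x)

end ModPkg

/-- An (ungraded) composition series of an `S ⊗_A H`-module. -/
structure CompSeries (V : ModPkg A H S) : Type u where
  len : ℕ
  c : Fin (len + 1) → AddSubgroup V.carrier
  mono : ∀ t : Fin len, c t.castSucc ≤ c t.succ
  bot : c 0 = ⊥
  top : c (Fin.last len) = ⊤
  stable : ∀ t, V.IsStable (c t)
  steps : ∀ t : Fin len, c t.castSucc ≠ c t.succ ∧
    ∀ p : AddSubgroup V.carrier, V.IsStable p → c t.castSucc ≤ p → p ≤ c t.succ →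
      p = c t.castSucc ∨ p = c t.succ

/-- The multiplicity of the simple module `M` in a composition series. -/
noncomputable def ModPkg.mult (V : ModPkg A H S) (cs : CompSeries V) (M : ModPkg A H S) : ℕ :=
  Nat.card { t : Fin cs.len // V.IsFactor (cs.c t.castSucc) (cs.c t.succ) M }

end Ungraded

/-- The algebra `S ⊗_A H` is split: the endomorphism algebra of every simple module is `S`. -/
def SplitAlg (A : Type u) [CommRing A] (H : Type u) [Ring H] [Algebra A H]
    (S : Type u) [CommRing S] [Algebra A S] : Prop :=
  ∀ M : ModPkg A H S, M.Simple →
    ∀ f : M.carrier →+ M.carrier,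
      (∀ (s : S) (x : M.carrier), f (s • x) = s • f x) →
      (∀ (h : H) (x : M.carrier), f (h • x) = h • f x) →
      ∃ s : S, ∀ x, f x = s • x

/-- The set of irreducible characters of `S ⊗_A H`. -/
def IrrChars (A : Type u) [CommRing A] (H : Type u) [Ring H] [Algebra A H]
    (S : Type u) [CommRing S] [Algebra A S] : Set (H → S) :=
  { χ | ∃ M : ModPkg A H S, M.Simple ∧ χ = M.char }

/-! ## Graded modules over `S ⊗_A H` for a `ℤ`-graded algebra `H = ⊕ 𝒜 i` -/

structure GrMod (A : Type u) [CommRing A] (H : Type u) [Ring H] [Algebra A H]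
    (𝒜 : ℤ → Submodule A H) (S : Type u) [CommRing S] [Algebra A S] : Type (u + 1) where
  carrier : Type u
  [acg : AddCommGroup carrier]
  [modS : Module S carrier]
  [modH : Module H carrier]
  smul_comm' : ∀ (h : H) (s : S) (x : carrier), h • s • x = s • h • x
  compat : ∀ (a : A) (x : carrier), (algebraMap A H a) • x = (algebraMap A S a) • x
  [fin : Module.Finite S carrier]
  grading : ℤ → Submodule S carrier
  [decomp : DirectSum.Decomposition grading]
  grading_smul : ∀ (i j : ℤ) (h : H), h ∈ 𝒜 i → ∀ x ∈ grading j, h • x ∈ grading (i + j)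

attribute [instance] GrMod.acg GrMod.modS GrMod.modH GrMod.fin GrMod.decomp

section Graded

variable {A : Type u} [CommRing A] {H : Type u} [Ring H] [Algebra A H]
  {𝒜 : ℤ → Submodule A H} {S : Type u} [CommRing S] [Algebra A S]

namespace GrMod

/-- The underlying ungraded module of a graded module. -/
def forget (V : GrMod A H 𝒜 S) : ModPkg A H S where
  carrier := V.carrier
  acg := V.acg
  modS := V.modS
  modH := V.modH
  smul_comm' := V.smul_comm'
  compat := V.compat
  fin := V.fin

/-- The action of a degree-`0` element of `H` on the degree-`i` piece of a graded module,
as an `S`-linear endomorphism; this is the representation `ρ_{V_i}` restricted to `H_0`. -/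
noncomputable def degAct (V : GrMod A H 𝒜 S) (h : 𝒜 0) (i : ℤ) :
    V.grading i →ₗ[S] V.grading i where
  toFun x := ⟨(h : H) • (x : V.carrier), by
    simpa using V.grading_smul 0 i (h : H) h.2 (x : V.carrier) x.2⟩
  map_add' x y := by
    apply Subtype.ext
    simp [smul_add]
  map_smul' s x := by
    apply Subtype.ext
    simpa using V.smul_comm' (h : H) s (x : V.carrier)

/-- A subgroup which is an `S ⊗_A H`-submodule and is graded. -/
def IsGrSub (V : GrMod A H 𝒜 S) (p : AddSubgroup V.carrier) : Prop :=
  V.forget.IsStable p ∧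
    ∀ x ∈ p, ∀ i : ℤ, ((DirectSum.decompose V.grading x i : V.grading i) : V.carrier) ∈ p

/-- A graded module is graded-simple if it is nonzero and has no nontrivial graded submodule. -/
def GrSimple (V : GrMod A H 𝒜 S) : Prop :=
  Nontrivial V.carrier ∧ ∀ p : AddSubgroup V.carrier, V.IsGrSub p → p = ⊥ ∨ p = ⊤

/-- Isomorphism of graded modules. -/
def GrIso (V W : GrMod A H 𝒜 S) : Prop :=
  ∃ e : V.carrier ≃+ W.carrier,
    (∀ (s : S) (x : V.carrier), e (s • x) = s • e x) ∧
    (∀ (h : H) (x : V.carrier), e (h • x) = h • e x) ∧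
    (∀ (i : ℤ), ∀ x ∈ V.grading i, e x ∈ W.grading i)

/-- `W` is the shift `V⟨j⟩` of `V`, i.e. `W_i = V_{i-j}`. -/
def IsShiftOf (W V : GrMod A H 𝒜 S) (j : ℤ) : Prop :=
  ∃ e : W.carrier ≃+ V.carrier,
    (∀ (s : S) (x : W.carrier), e (s • x) = s • e x) ∧
    (∀ (h : H) (x : W.carrier), e (h • x) = h • e x) ∧
    (∀ (i : ℤ), ∀ x ∈ W.grading i, e x ∈ V.grading (i - j))

/-- The factor `q/p` of a graded module is isomorphic, as a graded module, to the shift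
`M⟨n⟩` of `M`. -/
def IsFactorShift (V : GrMod A H 𝒜 S) (p q : AddSubgroup V.carrier)
    (M : GrMod A H 𝒜 S) (n : ℤ) : Prop :=
  ∃ φ : q →+ M.carrier,
    Surjective φ ∧
    (∀ x : q, φ x = 0 ↔ (x : V.carrier) ∈ p) ∧
    (∀ (s : S) (x y : q), (y : V.carrier) = s • (x : V.carrier) → φ y = s • φ x) ∧
    (∀ (h : H) (x y : q), (y : V.carrier) = h • (x : V.carrier) → φ y = h • φ x) ∧
    (∀ (i : ℤ) (x : q), (x : V.carrier) ∈ V.grading i → φ x ∈ M.grading (i - n)) ∧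
    (∀ (i : ℤ), ∀ m ∈ M.grading (i - n), ∃ x : q, (x : V.carrier) ∈ V.grading i ∧ φ x = m)

end GrMod

/-- A graded composition series of a graded module. -/
structure GrCompSeries (V : GrMod A H 𝒜 S) : Type u where
  len : ℕ
  c : Fin (len + 1) → AddSubgroup V.carrier
  mono : ∀ t : Fin len, c t.castSucc ≤ c t.succ
  bot : c 0 = ⊥
  top : c (Fin.last len) = ⊤
  graded : ∀ t, V.IsGrSub (c t)
  steps : ∀ t : Fin len, c t.castSucc ≠ c t.succ ∧
    ∀ p : AddSubgroup V.carrier, V.IsGrSub p → c t.castSucc ≤ p → p ≤ c t.succ →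
      p = c t.castSucc ∨ p = c t.succ

/-- The multiplicity `[V : M⟨n⟩]^gr` of the shifted graded simple module `M⟨n⟩` in a graded
composition series of `V`. -/
noncomputable def GrMod.multShift (V : GrMod A H 𝒜 S) (cs : GrCompSeries V)
    (M : GrMod A H 𝒜 S) (n : ℤ) : ℕ :=
  Nat.card { t : Fin cs.len // V.IsFactorShift (cs.c t.castSucc) (cs.c t.succ) M n }

/-- The graded decomposition number `∑_n q^n [V : M⟨n⟩]^gr ∈ ℕ[q,q⁻¹]`. -/
noncomputable def GrMod.entryPoly (V : GrMod A H 𝒜 S) (cs : GrCompSeries V)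
    (M : GrMod A H 𝒜 S) : LaurentPolynomial ℕ :=
  ∑ᶠ n : ℤ, (V.multShift cs M n) • LaurentPolynomial.T n

/-- A short exact sequence of graded modules (morphisms are of degree `0`). -/
structure GrSES (X Y Z : GrMod A H 𝒜 S) : Type u where
  f : X.carrier →+ Y.carrier
  g : Y.carrier →+ Z.carrier
  f_smulS : ∀ (s : S) (x : X.carrier), f (s • x) = s • f x
  f_smulH : ∀ (h : H) (x : X.carrier), f (h • x) = h • f x
  g_smulS : ∀ (s : S) (y : Y.carrier), g (s • y) = s • g y
  g_smulH : ∀ (h : H) (y : Y.carrier), g (h • y) = h • g y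
  inj : Injective f
  surj : Surjective g
  exact : ∀ y : Y.carrier, g y = 0 ↔ ∃ x, f x = y
  f_graded : ∀ (i : ℤ), ∀ x ∈ X.grading i, f x ∈ Y.grading i
  g_graded : ∀ (i : ℤ), ∀ y ∈ Y.grading i, g y ∈ Z.grading i

end Graded

/-- The defining relations of the Grothendieck group of finite-dimensional graded modules. -/
def grRelSet (A : Type u) [CommRing A] (H : Type u) [Ring H] [Algebra A H]
    (𝒜 : ℤ → Submodule A H) (S : Type u) [CommRing S] [Algebra A S] :
    Set (FreeAbelianGroup (GrMod A H 𝒜 S)) :=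
  { z | ∃ X Y Z : GrMod A H 𝒜 S, Nonempty (GrSES X Y Z) ∧
      z = FreeAbelianGroup.of Y - FreeAbelianGroup.of X - FreeAbelianGroup.of Z }

/-- The Grothendieck group `R_0(S ⊗_A H)` of finite-dimensional graded modules. -/
def Groth (A : Type u) [CommRing A] (H : Type u) [Ring H] [Algebra A H]
    (𝒜 : ℤ → Submodule A H) (S : Type u) [CommRing S] [Algebra A S] : Type (u + 1) :=
  FreeAbelianGroup (GrMod A H 𝒜 S) ⧸ AddSubgroup.closure (grRelSet A H 𝒜 S)

noncomputable instance (A : Type u) [CommRing A] (H : Type u) [Ring H] [Algebra A H]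
    (𝒜 : ℤ → Submodule A H) (S : Type u) [CommRing S] [Algebra A S] :
    AddCommGroup (Groth A H 𝒜 S) :=
  inferInstanceAs
    (AddCommGroup (FreeAbelianGroup (GrMod A H 𝒜 S) ⧸ AddSubgroup.closure (grRelSet A H 𝒜 S)))

/-- The class `[V]` of a graded module in the Grothendieck group; `R_0^+` is the set of
all such classes. -/
def GrMod.cls {A : Type u} [CommRing A] {H : Type u} [Ring H] [Algebra A H]
    {𝒜 : ℤ → Submodule A H} {S : Type u} [CommRing S] [Algebra A S]
    (V : GrMod A H 𝒜 S) : Groth A H 𝒜 S :=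
  QuotientAddGroup.mk (FreeAbelianGroup.of V)

section Char

variable {A : Type u} [CommRing A] {H : Type u} [Ring H] [Algebra A H]
  {𝒜 : ℤ → Submodule A H} {S : Type u} [CommRing S] [Algebra A S]

/-- The graded character of a graded module, as a function `H → S[t,t⁻¹]`:
it vanishes on the components of degree `≠ 0` and sends `h₀ ∈ H_0` to
`∑_i t^i χ_{V_i}(h₀)`. -/
noncomputable def GrMod.grChar [DirectSum.Decomposition 𝒜] (V : GrMod A H 𝒜 S) :
    H → LaurentPolynomial S :=
  fun h => ∑ᶠ i : ℤ, LaurentPolynomial.T i *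
    LaurentPolynomial.C
      (LinearMap.trace S (V.grading i) (V.degAct (DirectSum.decompose 𝒜 h 0) i))

/-- The set of irreducible graded characters `{χ^gr_{M⟨j⟩}}`: graded characters of graded
modules whose underlying ungraded module is simple (the grading of a simple module being
unique up to shift). -/
def IrrGrChars (A : Type u) [CommRing A] (H : Type u) [Ring H] [Algebra A H]
    (𝒜 : ℤ → Submodule A H) [DirectSum.Decomposition 𝒜]
    (S : Type u) [CommRing S] [Algebra A S] : Set (H → LaurentPolynomial S) :=
  { χ | ∃ V : GrMod A H 𝒜 S, V.forget.Simple ∧ χ = V.grChar }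

end Char

section FieldCoeffs

variable {A : Type u} [CommRing A] {H : Type u} [Ring H] [Algebra A H]
  {𝒜 : ℤ → Submodule A H} {F : Type u} [Field F] [Algebra A F]

/-- The characteristic polynomial of the action of a degree-`0` element of `H` on the
degree-`i` piece of a graded module. -/
noncomputable def GrMod.cpoly (V : GrMod A H 𝒜 F) (h : 𝒜 0) (i : ℤ) : Polynomial F :=
  LinearMap.charpoly (V.degAct h i)

/-- `L` is a graded `O ⊗_A H`-lattice in the graded `F ⊗_A H`-module `V`: an `O`-submodule,
stable under `H`, graded, finitely generated and free over `O`, any `O`-basis of which is an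
`F`-basis of `V`. -/
def GrMod.IsLattice (O : ValuationSubring F) (V : GrMod A H 𝒜 F)
    (L : AddSubgroup V.carrier) : Prop :=
  (∀ c : F, c ∈ O → ∀ x ∈ L, c • x ∈ L) ∧
  (∀ h : H, ∀ x ∈ L, h • x ∈ L) ∧
  (∀ x ∈ L, ∀ i : ℤ, ((DirectSum.decompose V.grading x i : V.grading i) : V.carrier) ∈ L) ∧
  ∃ (n : ℕ) (b : Fin n → V.carrier),
    LinearIndependent F b ∧ Submodule.span F (Set.range b) = ⊤ ∧ (∀ m, b m ∈ L) ∧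
    (∀ x ∈ L, ∃ c : Fin n → F, (∀ m, c m ∈ O) ∧ x = ∑ m, c m • b m)

/-- The subgroup `J(O)·L` of a lattice `L`, where `J(O)` is the maximal ideal
(= nonunits) of the valuation ring `O`. -/
def GrMod.mSub (O : ValuationSubring F) (V : GrMod A H 𝒜 F)
    (L : AddSubgroup V.carrier) : AddSubgroup V.carrier :=
  AddSubgroup.closure { z | ∃ c : O, ¬ IsUnit c ∧ ∃ y ∈ L, z = (c : F) • y }

/-- `φ` exhibits the graded `k ⊗_A H`-module `Y` as the modular reduction `k ⊗_O L` of the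
graded `O ⊗_A H`-lattice `L`, along the surjection `π : O → k` onto the residue field. -/
def GrMod.Reduces {k : Type u} [Field k] [Algebra A k]
    (O : ValuationSubring F) (π : O →+* k)
    (V : GrMod A H 𝒜 F) (L : AddSubgroup V.carrier)
    (Y : GrMod A H 𝒜 k) (φ : L →+ Y.carrier) : Prop :=
  Surjective φ ∧
  (∀ x : L, φ x = 0 ↔ (x : V.carrier) ∈ GrMod.mSub O V L) ∧
  (∀ (c : O) (x y : L), (y : V.carrier) = (c : F) • (x : V.carrier) → φ y = π c • φ x) ∧
  (∀ (h : H) (x y : L), (y : V.carrier) = h • (x : V.carrier) → φ y = h • φ x) ∧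
  (∀ (i : ℤ) (x : L), (x : V.carrier) ∈ V.grading i → φ x ∈ Y.grading i) ∧
  (∀ i : ℤ, ∀ y ∈ Y.grading i, ∃ x : L, (x : V.carrier) ∈ V.grading i ∧ φ x = y)

end FieldCoeffs



section LatticeAux
variable {K : Type u} [Field K] {V : Type u} [AddCommGroup V] [Module K V]

/-- `x` is an `O`-linear combination of the finite family `w`. -/
def InOSpan (O : ValuationSubring K) {κ : Type*} [Fintype κ] (w : κ → V) (x : V) : Prop :=
  ∃ c : κ → K, (∀ m, c m ∈ O) ∧ x = ∑ m, c m • w m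

namespace InOSpan

variable {O : ValuationSubring K} {κ : Type*} [Fintype κ] {w : κ → V}

lemma zero : InOSpan O w 0 := ⟨0, fun _ => zero_mem _, by simp⟩

lemma add {x y} (hx : InOSpan O w x) (hy : InOSpan O w y) : InOSpan O w (x + y) := by
  obtain ⟨c, hc, rfl⟩ := hx; obtain ⟨d, hd, rfl⟩ := hy
  exact ⟨c + d, fun m => add_mem (hc m) (hd m),
    by simp [add_smul, Finset.sum_add_distrib]⟩

lemma neg {x} (hx : InOSpan O w x) : InOSpan O w (-x) := by
  obtain ⟨c, hc, rfl⟩ := hx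
  exact ⟨fun m => -c m, fun m => neg_mem (hc m), by simp [neg_smul, Finset.sum_neg_distrib]⟩

lemma smul {x} (c : K) (hc : c ∈ O) (hx : InOSpan O w x) : InOSpan O w (c • x) := by
  obtain ⟨d, hd, rfl⟩ := hx
  exact ⟨fun m => c * d m, fun m => mul_mem hc (hd m),
    by simp [Finset.smul_sum, mul_smul]⟩

lemma single (i : κ) : InOSpan O w (w i) := by
  classical
  refine ⟨fun m => if m = i then 1 else 0, fun m => ?_, ?_⟩
  · dsimp only
    split
    · exact one_mem _
    · exact zero_mem _
  · simp [ite_smul, Finset.sum_ite_eq']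

lemma finsetSum {γ : Type*} (s : Finset γ) (f : γ → V)
    (hf : ∀ i ∈ s, InOSpan O w (f i)) : InOSpan O w (∑ i ∈ s, f i) := by
  classical
  induction s using Finset.induction_on with
  | empty => simpa using (zero : InOSpan O w 0)
  | insert _ _ h ih =>
      rw [Finset.sum_insert h]
      exact (hf _ (Finset.mem_insert_self _ _)).add
        (ih fun i hi => hf i (Finset.mem_insert_of_mem hi))

lemma mem_span {x} (hx : InOSpan O w x) : x ∈ Submodule.span K (Set.range w) := by
  obtain ⟨c, hc, rfl⟩ := hx
  exact Submodule.sum_mem _ fun m _ =>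
    Submodule.smul_mem _ _ (Submodule.subset_span ⟨m, rfl⟩)

lemma trans {κ' : Type*} [Fintype κ'] {b : κ' → V}
    (hw : ∀ m, InOSpan O b (w m)) {x} (hx : InOSpan O w x) : InOSpan O b x := by
  obtain ⟨c, hc, rfl⟩ := hx
  choose d hd hwd using hw
  refine ⟨fun i => ∑ m, c m * d m i,
    fun i => sum_mem fun m _ => mul_mem (hc m) (hd m i), ?_⟩
  calc ∑ m, c m • w m = ∑ m, ∑ i, (c m * d m i) • b i := by
        refine Finset.sum_congr rfl fun m _ => ?_
        rw [hwd m, Finset.smul_sum]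
        simp [smul_smul]
    _ = ∑ i, (∑ m, c m * d m i) • b i := by
        rw [Finset.sum_comm]
        exact Finset.sum_congr rfl fun i _ => (Finset.sum_smul).symm

lemma of_comp {κ' : Type*} [Fintype κ'] (e : κ' ≃ κ) {x}
    (hx : InOSpan O (w ∘ e) x) : InOSpan O w x := by
  obtain ⟨c, hc, rfl⟩ := hx
  refine ⟨c ∘ e.symm, fun m => hc _, ?_⟩
  rw [← Equiv.sum_comp e (fun m => (c ∘ e.symm) m • w m)]
  simp

end InOSpan
end LatticeAux

section LatticeAux2
variable {K : Type u} [Field K] {V : Type u} [AddCommGroup V] [Module K V]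

lemma li_update {n : ℕ} {b : Fin n → V} (hb : LinearIndependent K b)
    (i0 : Fin n) (lam : Fin n → K) (h0 : lam i0 ≠ 0) :
    LinearIndependent K (Function.update b i0 (∑ i, lam i • b i)) := by
  classical
  rw [Fintype.linearIndependent_iff] at hb ⊢
  intro g hg
  set X := ∑ i, lam i • b i with hX
  have key : ∑ i, ((if i = i0 then 0 else g i) + g i0 * lam i) • b i = 0 := by
    have e1 : ∑ i, ((if i = i0 then 0 else g i) + g i0 * lam i) • b i
        = ∑ i, (if i = i0 then 0 else g i) • b i + ∑ i, (g i0 * lam i) • b i := by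
      simp [add_smul, Finset.sum_add_distrib]
    have e2 : ∑ i, (if i = i0 then (0:K) else g i) • b i
        = ∑ i ∈ Finset.univ.erase i0, g i • b i := by
      rw [← Finset.add_sum_erase _ _ (Finset.mem_univ i0)]
      simp only [eq_self_iff_true, if_true, zero_smul, zero_add]
      exact Finset.sum_congr rfl fun i hi => by
        rw [if_neg (Finset.mem_erase.mp hi).1]
    have e3 : ∑ i, (g i0 * lam i) • b i = g i0 • X := by
      rw [hX, Finset.smul_sum]
      exact Finset.sum_congr rfl fun i _ => (smul_smul _ _ _).symm
    have e4 : ∑ i, g i • Function.update b i0 X i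
        = ∑ i ∈ Finset.univ.erase i0, g i • b i + g i0 • X := by
      rw [← Finset.add_sum_erase _ (fun i => g i • Function.update b i0 X i)
        (Finset.mem_univ i0), Function.update_self, add_comm]
      congr 1
      exact Finset.sum_congr rfl fun i hi => by
        rw [Function.update_of_ne (Finset.mem_erase.mp hi).1]
    rw [e1, e2, e3, ← e4]
    exact hg
  have hgi0 : g i0 = 0 := by
    have h := hb _ key i0
    simp only [eq_self_iff_true, if_true, zero_add] at h
    exact (mul_eq_zero.mp h).resolve_right h0
  intro i
  by_cases hi : i = i0
  · rw [hi]; exact hgi0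
  · have h := hb _ key i
    simpa [hi, hgi0] using h

lemma exists_good_basis (O : ValuationSubring K) (N : ℕ) (w : Fin N → V) :
    ∃ (n : ℕ) (b : Fin n → V), LinearIndependent K b ∧
      Submodule.span K (Set.range b) = Submodule.span K (Set.range w) ∧
      (∀ i, InOSpan O w (b i)) ∧ (∀ m, InOSpan O b (w m)) := by
  classical
  induction N with
  | zero =>
      refine ⟨0, Fin.elim0, linearIndependent_empty_type, ?_,
        fun i => i.elim0, fun m => m.elim0⟩
      congr 1
      rw [Set.range_eq_empty, Set.range_eq_empty]
  | succ N IH =>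
      obtain ⟨n, b, hLI, hsp, hbw, hwb⟩ := IH (fun m => w m.castSucc)
      set x := w (Fin.last N) with hxdef
      -- lifting O-combinations of the restricted family
      have hw_of_w' : ∀ y, InOSpan O (fun m : Fin N => w m.castSucc) y → InOSpan O w y := by
        rintro y ⟨c, hc, rfl⟩
        refine ⟨Fin.snoc c 0, fun m => ?_, ?_⟩
        · refine Fin.lastCases ?_ ?_ m
          · simp only [Fin.snoc_last]; exact zero_mem _
          · intro i; simp only [Fin.snoc_castSucc]; exact hc i
        · rw [Fin.sum_univ_castSucc]
          simp [Fin.snoc_castSucc, Fin.snoc_last]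
      have hxw : InOSpan O w x := by rw [hxdef]; exact InOSpan.single _
      by_cases hx : x ∈ Submodule.span K (Set.range b)
      · -- x already in the span of b
        have hspw : Submodule.span K (Set.range w) = Submodule.span K (Set.range b) := by
          apply le_antisymm
          · rw [Submodule.span_le]
            rintro _ ⟨m, rfl⟩
            refine Fin.lastCases ?_ ?_ m
            · exact hx
            · intro i
              have : w i.castSucc ∈ Submodule.span K
                  (Set.range fun m : Fin N => w m.castSucc) :=
                Submodule.subset_span ⟨i, rfl⟩
              rw [← hsp] at this
              exact this
          · rw [hsp, Submodule.span_le]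
            rintro _ ⟨i, rfl⟩
            exact Submodule.subset_span ⟨i.castSucc, rfl⟩
        obtain ⟨lam, hlam⟩ := (Submodule.mem_span_range_iff_exists_fun K).mp hx
        by_cases hO : ∀ i, lam i ∈ O
        · refine ⟨n, b, hLI, hspw.symm, fun i => hw_of_w' _ (hbw i), ?_⟩
          intro m
          refine Fin.lastCases ?_ ?_ m
          · exact ⟨lam, hO, hlam.symm⟩
          · intro i; exact hwb i
        · push_neg at hO
          obtain ⟨i₁, hi₁⟩ := hO
          obtain ⟨i0, -, hmax⟩ := Finset.exists_max_image Finset.univ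
            (fun i => O.valuation (lam i)) ⟨i₁, Finset.mem_univ _⟩
          have hmax' : ∀ i, O.valuation (lam i) ≤ O.valuation (lam i0) :=
            fun i => hmax i (Finset.mem_univ i)
          have hlam0 : lam i0 ≠ 0 := by
            intro h0
            apply hi₁
            have h1 := hmax' i₁
            rw [h0, map_zero, le_zero_iff] at h1
            rw [(Valuation.zero_iff _).mp h1]
            exact zero_mem _
          have hv0 : O.valuation (lam i0) ≠ 0 := by
            simpa [Valuation.zero_iff] using hlam0
          have hnotO : lam i0 ∉ O := by
            intro hmem
            apply hi₁
            rw [← O.valuation_le_one_iff] at hmem ⊢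
            exact (hmax' i₁).trans hmem
          have hinv : (lam i0)⁻¹ ∈ O := (O.mem_or_inv_mem (lam i0)).resolve_left hnotO
          have hratio : ∀ i, lam i * (lam i0)⁻¹ ∈ O := by
            intro i
            rw [← O.valuation_le_one_iff, map_mul, Valuation.map_inv]
            calc O.valuation (lam i) * (O.valuation (lam i0))⁻¹
                ≤ O.valuation (lam i0) * (O.valuation (lam i0))⁻¹ :=
                  mul_le_mul_left (hmax' i) _
              _ = 1 := mul_inv_cancel₀ hv0
          set b' : Fin n → V := Function.update b i0 x with hb'def
          set cc : Fin n → K :=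
            fun i => if i = i0 then (lam i0)⁻¹ else -(lam i * (lam i0)⁻¹) with hccdef
          have hccO : ∀ i, cc i ∈ O := by
            intro i
            rw [hccdef]
            dsimp only
            split
            · exact hinv
            · exact neg_mem (hratio i)
          have hbi0 : ∑ i, cc i • b' i = b i0 := by
            rw [← Finset.add_sum_erase _ (fun i => cc i • b' i) (Finset.mem_univ i0)]
            have h1 : cc i0 • b' i0
                = b i0 + ∑ i ∈ Finset.univ.erase i0, ((lam i0)⁻¹ * lam i) • b i := by
              rw [hb'def, hccdef]
              simp only [Function.update_self, eq_self_iff_true, if_true]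
              rw [← hlam, ← Finset.add_sum_erase _ (fun i => lam i • b i)
                (Finset.mem_univ i0), smul_add, smul_smul, inv_mul_cancel₀ hlam0,
                one_smul, Finset.smul_sum]
              congr 1
              exact Finset.sum_congr rfl fun i _ => (smul_smul _ _ _)
            have h2 : ∑ i ∈ Finset.univ.erase i0, cc i • b' i
                = ∑ i ∈ Finset.univ.erase i0, (-((lam i0)⁻¹ * lam i)) • b i := by
              refine Finset.sum_congr rfl fun i hi => ?_
              have hne : i ≠ i0 := (Finset.mem_erase.mp hi).1
              rw [hb'def, hccdef]
              simp only [Function.update_of_ne hne, if_neg hne, mul_comm]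
            rw [h1, h2, add_assoc, ← Finset.sum_add_distrib]
            simp [← add_smul]
          have hb'LI : LinearIndependent K b' := by
            have := li_update hLI i0 lam hlam0
            rwa [hlam, ← hb'def] at this
          have hb'b : ∀ i, InOSpan O b' (b i) := by
            intro i
            by_cases hi : i = i0
            · rw [hi]; exact ⟨cc, hccO, hbi0.symm⟩
            · have : b i = b' i := (Function.update_of_ne hi x b).symm
              rw [this]; exact InOSpan.single i
          have hspb' : Submodule.span K (Set.range b') = Submodule.span K (Set.range b) := by
            apply le_antisymm
            · rw [Submodule.span_le]
              rintro _ ⟨i, rfl⟩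
              by_cases hi : i = i0
              · rw [hi, hb'def, Function.update_self]; exact hx
              · rw [hb'def, Function.update_of_ne hi]
                exact Submodule.subset_span ⟨i, rfl⟩
            · rw [Submodule.span_le]
              rintro _ ⟨i, rfl⟩
              have := (hb'b i).mem_span
              exact this
          refine ⟨n, b', hb'LI, ?_, ?_, ?_⟩
          · rw [hspb', hspw]
          · intro i
            by_cases hi : i = i0
            · rw [hi, hb'def, Function.update_self]; exact hxw
            · rw [hb'def, Function.update_of_ne hi]
              exact hw_of_w' _ (hbw i)
          · intro m
            refine Fin.lastCases ?_ ?_ m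
            · have : x = b' i0 := by rw [hb'def, Function.update_self]
              rw [← hxdef, this]
              exact InOSpan.single i0
            · intro i
              exact InOSpan.trans hb'b (hwb i)
      · -- extend by x
        refine ⟨n + 1, Fin.cons x b, hLI.fin_cons hx, ?_, ?_, ?_⟩
        · apply le_antisymm
          · rw [Submodule.span_le]
            rintro _ ⟨i, rfl⟩
            refine Fin.cases ?_ ?_ i
            · rw [Fin.cons_zero]
              exact Submodule.subset_span ⟨Fin.last N, rfl⟩
            · intro i
              rw [Fin.cons_succ]
              have h1 : b i ∈ Submodule.span K
                  (Set.range fun m : Fin N => w m.castSucc) :=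
                hsp ▸ Submodule.subset_span ⟨i, rfl⟩
              refine Submodule.span_mono ?_ h1
              rintro _ ⟨m, rfl⟩
              exact ⟨m.castSucc, rfl⟩
          · rw [Submodule.span_le]
            rintro _ ⟨m, rfl⟩
            refine Fin.lastCases ?_ ?_ m
            · exact Submodule.subset_span ⟨0, by simp [hxdef]⟩
            · intro i
              have h1 : w i.castSucc ∈ Submodule.span K (Set.range b) :=
                hsp ▸ Submodule.subset_span (⟨i, rfl⟩ : w i.castSucc ∈ Set.range fun m : Fin N => w m.castSucc)
              refine Submodule.span_mono ?_ h1
              rintro _ ⟨i', rfl⟩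
              exact ⟨i'.succ, Fin.cons_succ _ _ _⟩
        · intro i
          refine Fin.cases ?_ ?_ i
          · rw [Fin.cons_zero]; exact hxw
          · intro i
            rw [Fin.cons_succ]
            exact hw_of_w' _ (hbw i)
        · intro m
          have hlift : ∀ y, InOSpan O b y → InOSpan O (Fin.cons x b : Fin (n+1) → V) y := by
            rintro y ⟨c, hc, rfl⟩
            refine ⟨Fin.cons 0 c, fun i => ?_, ?_⟩
            · refine Fin.cases ?_ ?_ i
              · simp only [Fin.cons_zero]; exact zero_mem _
              · intro i; simp only [Fin.cons_succ]; exact hc i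
            · rw [Fin.sum_univ_succ]
              simp [Fin.cons_zero, Fin.cons_succ]
          refine Fin.lastCases ?_ ?_ m
          · have hc0 : (Fin.cons x b : Fin (n+1) → V) 0 = x := by simp
            rw [← hxdef, ← hc0]
            exact InOSpan.single 0
          · intro i
            exact hlift _ (hwb i)

end LatticeAux2

/-- Every finite-dimensional graded `K ⊗_A H`-module `V` admits a graded
`O ⊗_A H`-lattice: a graded, `H`-stable, finitely generated free `O`-submodule of `V` any
`O`-basis of which is a `K`-basis of `V`. -/
theorem graded_lattice_exists
    (A : Type u) [CommRing A] [IsDomain A]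
    (K : Type u) [Field K] [Algebra A K] [IsFractionRing A K]
    (H : Type u) [Ring H] [Algebra A H] [Module.Free A H] [Module.Finite A H]
    (𝒜 : ℤ → Submodule A H) [GradedAlgebra 𝒜]
    (O : ValuationSubring K) (hAO : ∀ a : A, algebraMap A K a ∈ O)
    (V : GrMod A H 𝒜 K) :
    ∃ L : AddSubgroup V.carrier, V.IsLattice O L := by
  classical
  -- a finite homogeneous spanning family of `V`
  obtain ⟨p, xs, hxs⟩ := Module.Finite.exists_fin (R := K) (M := V.carrier)
  set Dset : Finset ℤ :=
    Finset.univ.sup fun j => DFinsupp.support (DirectSum.decompose V.grading (xs j)) with hDset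
  set v : (Fin p × {d : ℤ // d ∈ Dset}) → V.carrier :=
    fun jj => ((DirectSum.decompose V.grading (xs jj.1) jj.2.1 :
      V.grading jj.2.1) : V.carrier) with hvdef
  have hv : ∀ jj, v jj ∈ V.grading jj.2.1 := fun jj => SetLike.coe_mem _
  have hvtop : Submodule.span K (Set.range v) = ⊤ := by
    rw [eq_top_iff, ← hxs, Submodule.span_le]
    rintro _ ⟨j, rfl⟩
    have hsub : DFinsupp.support (DirectSum.decompose V.grading (xs j)) ⊆ Dset := by
      rw [hDset]
      exact Finset.le_sup (f := fun j => DFinsupp.support (DirectSum.decompose V.grading (xs j)))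
        (Finset.mem_univ j)
    have hxj : xs j = ∑ d ∈ Dset,
        ((DirectSum.decompose V.grading (xs j) d : V.grading d) : V.carrier) := by
      conv_lhs => rw [← DirectSum.sum_support_decompose V.grading (xs j)]
      exact Finset.sum_subset hsub fun d _ hd => by
        rw [DFinsupp.notMem_support_iff.mp hd, ZeroMemClass.coe_zero]
    rw [SetLike.mem_coe, hxj]
    refine Submodule.sum_mem _ fun d hd => ?_
    exact Submodule.subset_span ⟨(j, ⟨d, hd⟩), rfl⟩
  -- an `A`-basis of `H` and the degrees of its components
  set bH : Module.Basis (Module.Free.ChooseBasisIndex A H) A H := Module.Free.chooseBasis A H with hbHdef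
  set Nset : Finset ℤ :=
    Finset.univ.sup fun k => DFinsupp.support (DirectSum.decompose 𝒜 (bH k)) with hNset
  -- the generating family of the lattice
  set w : (Module.Free.ChooseBasisIndex A H × (Fin p × {d : ℤ // d ∈ Dset}) ×
      {n : ℤ // n ∈ Nset}) → V.carrier :=
    fun i => ((DirectSum.decompose 𝒜 (bH i.1) i.2.2.1 : 𝒜 i.2.2.1) : H) • v i.2.1 with hwdef
  set degw : (Module.Free.ChooseBasisIndex A H × (Fin p × {d : ℤ // d ∈ Dset}) ×
      {n : ℤ // n ∈ Nset}) → ℤ := fun i => i.2.2.1 + i.2.1.2.1 with hdegwdef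
  have hwdeg : ∀ i, w i ∈ V.grading (degw i) := fun i =>
    V.grading_smul _ _ _ (SetLike.coe_mem _) _ (hv _)
  have hbHsum : ∀ k, (bH k : H)
      = ∑ n : {n : ℤ // n ∈ Nset}, ((DirectSum.decompose 𝒜 (bH k) n.1 : 𝒜 n.1) : H) := by
    intro k
    rw [Finset.sum_coe_sort Nset (fun n => ((DirectSum.decompose 𝒜 (bH k) n : 𝒜 n) : H))]
    have hsub : DFinsupp.support (DirectSum.decompose 𝒜 (bH k)) ⊆ Nset := by
      rw [hNset]
      exact Finset.le_sup (f := fun k => DFinsupp.support (DirectSum.decompose 𝒜 (bH k)))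
        (Finset.mem_univ k)
    conv_lhs => rw [← DirectSum.sum_support_decompose 𝒜 (bH k)]
    exact Finset.sum_subset hsub fun d _ hd => by
      rw [DFinsupp.notMem_support_iff.mp hd, ZeroMemClass.coe_zero]
  -- the key claim: the `H`-orbit of each `v jj` is in the `O`-span of `w`
  have C1 : ∀ (h : H) (jj : Fin p × {d : ℤ // d ∈ Dset}), InOSpan O w (h • v jj) := by
    intro h jj
    refine ⟨fun i => if i.2.1 = jj then algebraMap A K (bH.repr h i.1) else 0,
      fun i => ?_, ?_⟩
    · dsimp only
      split
      · exact hAO _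
      · exact zero_mem _
    · have step1 : h • v jj
          = ∑ k, algebraMap A K (bH.repr h k) • ((bH k : H) • v jj) := by
        conv_lhs => rw [← bH.sum_repr h]
        rw [Finset.sum_smul]
        refine Finset.sum_congr rfl fun k _ => ?_
        rw [Algebra.smul_def, mul_smul, V.compat]
      have step2 : ∀ k, (bH k : H) • v jj = ∑ n : {n : ℤ // n ∈ Nset}, w (k, jj, n) := by
        intro k
        conv_lhs => rw [hbHsum k]
        rw [Finset.sum_smul]
      rw [step1, Fintype.sum_prod_type]
      refine Finset.sum_congr rfl fun k _ => ?_
      rw [Fintype.sum_prod_type]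
      have collapse : ∀ jj' : Fin p × {d : ℤ // d ∈ Dset},
          (∑ n : {n : ℤ // n ∈ Nset},
            (if jj' = jj then algebraMap A K (bH.repr h k) else 0) • w (k, jj', n))
          = if jj' = jj then
              ∑ n : {n : ℤ // n ∈ Nset}, algebraMap A K (bH.repr h k) • w (k, jj', n)
            else 0 := by
        intro jj'
        split_ifs with hjj <;> simp
      rw [Finset.sum_congr rfl fun jj' _ => collapse jj', Finset.sum_ite_eq' Finset.univ jj]
      simp only [Finset.mem_univ, if_true]
      rw [step2 k, Finset.smul_sum]
  -- the span of `w` is everything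
  have span_top : Submodule.span K (Set.range w) = ⊤ := by
    rw [eq_top_iff, ← hvtop, Submodule.span_le]
    rintro _ ⟨jj, rfl⟩
    have h1 := (C1 1 jj).mem_span
    rwa [one_smul] at h1
  -- decomposition of elements of the `O`-span of `w`
  have hcomp : ∀ (c : _ → K) (t : ℤ),
      ((DirectSum.decompose V.grading (∑ i, c i • w i) t : V.grading t) : V.carrier)
      = ∑ i, c i • ((DirectSum.decompose V.grading (w i) t : V.grading t) : V.carrier) := by
    intro c t
    rw [DirectSum.decompose_sum, DFinsupp.finset_sum_apply, AddSubmonoidClass.coe_finset_sum]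
    refine Finset.sum_congr rfl fun i _ => ?_
    rw [DirectSum.decompose_smul]
    rfl
  -- the lattice
  refine ⟨{ carrier := {x | InOSpan O w x}
            zero_mem' := InOSpan.zero
            add_mem' := fun hx hy => hx.add hy
            neg_mem' := fun hx => hx.neg }, ?_, ?_, ?_, ?_⟩
  · intro c hc x hx
    exact hx.smul c hc
  · intro h x hx
    obtain ⟨c, hc, rfl⟩ := hx
    have hsw : h • ∑ i, c i • w i = ∑ i, c i • (h • w i) := by
      rw [Finset.smul_sum]
      exact Finset.sum_congr rfl fun i _ => V.smul_comm' h (c i) (w i)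
    show InOSpan O w _
    rw [hsw]
    refine InOSpan.finsetSum _ _ fun i _ => InOSpan.smul (c i) (hc i) ?_
    have hmul : h • w i
        = (h * ((DirectSum.decompose 𝒜 (bH i.1) i.2.2.1 : 𝒜 i.2.2.1) : H)) • v i.2.1 := by
      rw [hwdef]
      exact (mul_smul _ _ _).symm
    rw [hmul]
    exact C1 _ _
  · intro x hx t
    obtain ⟨c, hc, rfl⟩ := hx
    refine ⟨fun i => if degw i = t then c i else 0, fun i => ?_, ?_⟩
    · dsimp only
      split
      · exact hc i
      · exact zero_mem _
    · rw [hcomp c t]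
      refine Finset.sum_congr rfl fun i _ => ?_
      dsimp only
      by_cases hdi : degw i = t
      · rw [if_pos hdi, DirectSum.decompose_of_mem_same V.grading (hdi ▸ hwdeg i)]
      · rw [if_neg hdi, DirectSum.decompose_of_mem_ne V.grading (hwdeg i) hdi,
          smul_zero, zero_smul]
  · obtain ⟨n, b, hbLI, hbsp, hbw, hwb⟩ :=
      exists_good_basis O (Fintype.card _) (w ∘ (Fintype.equivFin _).symm)
    have hrange : Set.range (w ∘ (Fintype.equivFin _).symm) = Set.range w :=
      (Fintype.equivFin _).symm.surjective.range_comp w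
    have hwe : (w ∘ (Fintype.equivFin _).symm) ∘ (Fintype.equivFin _) = w := by
      funext i
      simp
    refine ⟨n, b, hbLI, ?_, ?_, ?_⟩
    · rw [hbsp, hrange, span_top]
    · intro m
      exact InOSpan.of_comp (Fintype.equivFin _).symm (hbw m)
    · intro x hx
      have hx' : InOSpan O (w ∘ (Fintype.equivFin _).symm) x := by
        refine InOSpan.of_comp (Fintype.equivFin _) ?_
        rwa [hwe]
      exact InOSpan.trans hwb hx'
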